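/- For every integer k ≥ 2 and every integer d > k, in the random k-tree process the expected numbers of vertices of given degrees satisfy, for all n ≥ k+1, E[X_d(n+1)] = p_k(d−1, n)·E[X_{d−1}(n)] + (1 − p_k(d, n))·E[X_d(n)], where p_k(d, n) = ((k − 1)·d − k·(k − 2)) / (k·n − k² + 1). -/

import Mathlib

open MeasureTheory

/-- The complete graph on the vertices `0, …, m-1` inside `ℕ`. -/
def completeBelow (m : ℕ) : SimpleGraph ℕ :=
  SimpleGraph.fromRel (fun u v => u < m ∧ v < m)

/-- The graph obtained from `g` by joining the new vertex `n` to all vertices of `C`. -/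
def extendGraph (g : SimpleGraph ℕ) (n : ℕ) (C : Finset ℕ) : SimpleGraph ℕ :=
  SimpleGraph.fromRel (fun u v => g.Adj u v ∨ (u = n ∧ v ∈ C))

/-- The random `k`-tree process: `G (k+1)` is almost surely the complete graph on the
vertices `0, …, k` (representing `v₁, …, v_{k+1}`), and given `G n = g` (for `n ≥ k+1`),
a `k`-clique of `g` is chosen uniformly at random among all `k`-cliques of `g` and the
new vertex `n` (representing `v_{n+1}`) is joined to all of its `k` vertices. -/
structure IsRandomKTreeProcess (k : ℕ) {Ω : Type*} [MeasurableSpace Ω]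
    (μ : Measure Ω) (G : ℕ → Ω → SimpleGraph ℕ) : Prop where
  meas : ∀ n (g : SimpleGraph ℕ), MeasurableSet {ω | G n ω = g}
  init : μ {ω | G (k + 1) ω = completeBelow (k + 1)} = 1
  step : ∀ n, k + 1 ≤ n → ∀ g : SimpleGraph ℕ, ∀ C : Finset ℕ, g.IsNClique k C →
    μ {ω | G n ω = g ∧ G (n + 1) ω = extendGraph g n C}
      = μ {ω | G n ω = g} / ({D : Finset ℕ | g.IsNClique k D}.ncard : ENNReal)

/-- `degCount g n d` is the number of vertices of degree `d` in the graph `g` whose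
vertex set is `{0, …, n-1}`. -/
noncomputable def degCount (g : SimpleGraph ℕ) (n d : ℕ) : ℕ :=
  {v : ℕ | v < n ∧ (g.neighborSet v).ncard = d}.ncard

set_option linter.unusedSectionVars false

attribute [local instance] Classical.propDecidable

namespace KTreeAux

lemma completeBelow_adj {m u v : ℕ} :
    (completeBelow m).Adj u v ↔ u ≠ v ∧ u < m ∧ v < m := by
  simp only [completeBelow, SimpleGraph.fromRel_adj]; tauto

/-- Configurations reachable by the process. -/
inductive Reach (k : ℕ) : ℕ → SimpleGraph ℕ → Prop
  | base : Reach k (k + 1) (completeBelow (k + 1))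
  | step {n : ℕ} {g : SimpleGraph ℕ} {C : Finset ℕ} :
      k + 1 ≤ n → Reach k n g → g.IsNClique k C → Reach k (n + 1) (extendGraph g n C)

/-- The combinatorial invariant maintained by the process. -/
structure Inv (k n : ℕ) (g : SimpleGraph ℕ) : Prop where
  supp : ∀ ⦃u v : ℕ⦄, g.Adj u v → u < n ∧ v < n
  nbhdFin : ∀ v, (g.neighborSet v).Finite
  degLB : ∀ v < n, k ≤ (g.neighborSet v).ncard
  clFin : {C : Finset ℕ | g.IsNClique k C}.Finite
  clCard : {C : Finset ℕ | g.IsNClique k C}.ncard + k ^ 2 = k * n + 1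
  clAt : ∀ v < n, {C : Finset ℕ | g.IsNClique k C ∧ v ∈ C}.ncard + k * (k - 2)
      = (k - 1) * (g.neighborSet v).ncard

lemma Inv.clique_lt {k n : ℕ} {g : SimpleGraph ℕ} (h : Inv k n g) (hk : 2 ≤ k)
    {D : Finset ℕ} (hD : g.IsNClique k D) : ∀ v ∈ D, v < n := by
  intro v hv
  have hcard : D.card = k := hD.2
  have h2 : 1 < D.card := by omega
  obtain ⟨u, hu, hne⟩ := Finset.exists_mem_ne h2 v
  exact (h.supp (hD.1 hu hv hne)).2

lemma completeBelow_neighborSet {m v : ℕ} (hv : v < m) :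
    (completeBelow m).neighborSet v = ↑((Finset.range m).erase v) := by
  ext u
  simp only [SimpleGraph.mem_neighborSet, completeBelow_adj, Finset.coe_erase,
    Finset.coe_range, Set.mem_diff, Set.mem_Iio, Set.mem_singleton_iff]
  constructor
  · rintro ⟨h1, h2, h3⟩; exact ⟨h3, fun h => h1 h.symm⟩
  · rintro ⟨h1, h2⟩; exact ⟨fun h => h2 h.symm, hv, h1⟩

lemma completeBelow_cliques {m k : ℕ} (hk : 2 ≤ k) :
    {C : Finset ℕ | (completeBelow m).IsNClique k C}
      = ↑((Finset.range m).powersetCard k) := by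
  ext C
  simp only [Set.mem_setOf_eq, SimpleGraph.isNClique_iff, Finset.mem_coe,
    Finset.mem_powersetCard]
  constructor
  · rintro ⟨hcl, hcard⟩
    refine ⟨fun v hv => ?_, hcard⟩
    have h2 : 1 < C.card := by omega
    obtain ⟨u, hu, hne⟩ := Finset.exists_mem_ne h2 v
    have := hcl hv hu (Ne.symm hne)
    rw [completeBelow_adj] at this
    exact Finset.mem_range.mpr this.2.1
  · rintro ⟨hsub, hcard⟩
    refine ⟨fun u hu v hv huv => ?_, hcard⟩
    exact completeBelow_adj.mpr ⟨huv, Finset.mem_range.mp (hsub hu),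
      Finset.mem_range.mp (hsub hv)⟩

lemma choose_succ_self (k : ℕ) : (k + 1).choose k = k + 1 := by
  rw [← Nat.choose_symm (Nat.le_succ k)]
  simp

lemma inv_base {k : ℕ} (hk : 2 ≤ k) : Inv k (k + 1) (completeBelow (k + 1)) := by
  obtain ⟨j, rfl⟩ : ∃ j, k = j + 2 := ⟨k - 2, by omega⟩
  set k := j + 2 with hkdef
  have hdeg : ∀ v < k + 1, (completeBelow (k + 1)).neighborSet v
      = ↑((Finset.range (k+1)).erase v) := fun v hv => completeBelow_neighborSet hv
  have hdegc : ∀ v < k + 1, ((completeBelow (k + 1)).neighborSet v).ncard = k := by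
    intro v hv
    rw [hdeg v hv, Set.ncard_coe_finset, Finset.card_erase_of_mem (Finset.mem_range.mpr hv),
      Finset.card_range]
    omega
  have hcl := completeBelow_cliques (m := k + 1) (k := k) hk
  refine ⟨?_, ?_, ?_, ?_, ?_, ?_⟩
  · intro u v h; rw [completeBelow_adj] at h; exact ⟨h.2.1, h.2.2⟩
  · intro v
    by_cases hv : v < k + 1
    · rw [hdeg v hv]; exact (Finset.finite_toSet _)
    · have he : (completeBelow (k + 1)).neighborSet v = ∅ := by
        ext u
        simp only [SimpleGraph.mem_neighborSet, completeBelow_adj,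
          Set.mem_empty_iff_false, iff_false]
        rintro ⟨-, h2, -⟩; exact hv h2
      rw [he]; exact Set.finite_empty
  · intro v hv; rw [hdegc v hv]
  · rw [hcl]; exact Finset.finite_toSet _
  · rw [hcl, Set.ncard_coe_finset, Finset.card_powersetCard, Finset.card_range,
      choose_succ_self]
    ring
  · intro v hv
    have hsetAt : {C : Finset ℕ | (completeBelow (k+1)).IsNClique k C ∧ v ∈ C}
        = ↑(((Finset.range (k+1)).powersetCard k).filter (fun C => v ∈ C)) := by
      ext C
      simp only [Set.mem_setOf_eq, Finset.coe_filter, Set.mem_setOf_eq]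
      rw [show (completeBelow (k+1)).IsNClique k C ↔ C ∈ (Finset.range (k+1)).powersetCard k from
        by rw [← Finset.mem_coe, ← hcl]; rfl]
    have hneg : ((Finset.range (k+1)).powersetCard k).filter (fun C => ¬ v ∈ C)
        = {(Finset.range (k+1)).erase v} := by
      ext C
      simp only [Finset.mem_filter, Finset.mem_powersetCard, Finset.mem_singleton]
      constructor
      · rintro ⟨⟨hsub, hcard⟩, hv'⟩
        apply Finset.eq_of_subset_of_card_le
        · intro x hx
          exact Finset.mem_erase.mpr ⟨fun h => hv' (h ▸ hx), hsub hx⟩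
        · rw [Finset.card_erase_of_mem (Finset.mem_range.mpr hv), Finset.card_range, hcard]
          omega
      · rintro rfl
        refine ⟨⟨Finset.erase_subset _ _, ?_⟩, fun h => (Finset.mem_erase.mp h).1 rfl⟩
        rw [Finset.card_erase_of_mem (Finset.mem_range.mpr hv), Finset.card_range]
        omega
    have htot := Finset.card_filter_add_card_filter_not
      (s := (Finset.range (k+1)).powersetCard k) (p := fun C => v ∈ C)
    rw [hneg, Finset.card_singleton, Finset.card_powersetCard, Finset.card_range,
      choose_succ_self] at htot
    rw [hsetAt, Set.ncard_coe_finset, hdegc v hv]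
    have hc : (((Finset.range (k+1)).powersetCard k).filter (fun C => v ∈ C)).card = k := by
      omega
    rw [hc]
    have h1 : k - 1 = j + 1 := by omega
    have h2 : k - 2 = j := by omega
    rw [h1, h2, hkdef]
    ring

section Ext

variable {k n : ℕ} {g : SimpleGraph ℕ} {C₀ : Finset ℕ}

lemma ext_adj (hg : Inv k n g) (hk : 2 ≤ k) (hC : g.IsNClique k C₀) {u v : ℕ} :
    (extendGraph g n C₀).Adj u v ↔
      g.Adj u v ∨ (u = n ∧ v ∈ C₀) ∨ (v = n ∧ u ∈ C₀) := by
  have hlt := hg.clique_lt hk hC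
  simp only [extendGraph, SimpleGraph.fromRel_adj]
  constructor
  · rintro ⟨hne, (h | h) | (h | h)⟩
    · exact Or.inl h
    · exact Or.inr (Or.inl h)
    · exact Or.inl h.symm
    · exact Or.inr (Or.inr h)
  · rintro (h | ⟨h1, h2⟩ | ⟨h1, h2⟩)
    · exact ⟨h.ne, Or.inl (Or.inl h)⟩
    · refine ⟨fun hh => ?_, Or.inl (Or.inr ⟨h1, h2⟩)⟩
      subst h1; subst hh; exact absurd (hlt _ h2) (lt_irrefl _)
    · refine ⟨fun hh => ?_, Or.inr (Or.inr ⟨h1, h2⟩)⟩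
      subst h1; subst hh; exact absurd (hlt _ h2) (lt_irrefl _)

lemma not_mem_nbhd (hg : Inv k n g) (v : ℕ) : n ∉ g.neighborSet v := by
  intro h
  exact absurd (hg.supp ((SimpleGraph.mem_neighborSet _ _ _).mp h)).2 (lt_irrefl n)

lemma n_not_mem_clique (hg : Inv k n g) (hk : 2 ≤ k) (hC : g.IsNClique k C₀) : n ∉ C₀ :=
  fun h => absurd (hg.clique_lt hk hC n h) (lt_irrefl n)

lemma ext_nbhd_n (hg : Inv k n g) (hk : 2 ≤ k) (hC : g.IsNClique k C₀) :
    (extendGraph g n C₀).neighborSet n = ↑C₀ := by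
  ext u
  rw [SimpleGraph.mem_neighborSet, ext_adj hg hk hC, Finset.mem_coe]
  constructor
  · rintro (h | ⟨-, h⟩ | ⟨rfl, h⟩)
    · exact absurd (hg.supp h).1 (lt_irrefl n)
    · exact h
    · exact absurd h (n_not_mem_clique hg hk hC)
  · intro h; exact Or.inr (Or.inl ⟨rfl, h⟩)

lemma ext_nbhd_mem (hg : Inv k n g) (hk : 2 ≤ k) (hC : g.IsNClique k C₀)
    {v : ℕ} (hv : v ∈ C₀) :
    (extendGraph g n C₀).neighborSet v = insert n (g.neighborSet v) := by
  have hvn : v ≠ n := fun h => absurd (h ▸ hg.clique_lt hk hC v hv) (lt_irrefl n)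
  ext u
  rw [SimpleGraph.mem_neighborSet, ext_adj hg hk hC, Set.mem_insert_iff,
    SimpleGraph.mem_neighborSet]
  constructor
  · rintro (h | ⟨h1, -⟩ | ⟨rfl, -⟩)
    · exact Or.inr h
    · exact absurd h1 hvn
    · exact Or.inl rfl
  · rintro (rfl | h)
    · exact Or.inr (Or.inr ⟨rfl, hv⟩)
    · exact Or.inl h

lemma ext_nbhd_not_mem (hg : Inv k n g) (hk : 2 ≤ k) (hC : g.IsNClique k C₀)
    {v : ℕ} (hvn : v ≠ n) (hv : v ∉ C₀) :
    (extendGraph g n C₀).neighborSet v = g.neighborSet v := by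
  ext u
  rw [SimpleGraph.mem_neighborSet, ext_adj hg hk hC, SimpleGraph.mem_neighborSet]
  constructor
  · rintro (h | ⟨h1, -⟩ | ⟨-, h⟩)
    · exact h
    · exact absurd h1 hvn
    · exact absurd h hv
  · exact fun h => Or.inl h

lemma ext_cliques (hg : Inv k n g) (hk : 2 ≤ k) (hC : g.IsNClique k C₀) :
    {D : Finset ℕ | (extendGraph g n C₀).IsNClique k D}
      = {D : Finset ℕ | g.IsNClique k D}
        ∪ (fun w => insert n (C₀.erase w)) '' ↑C₀ := by
  have hnC := n_not_mem_clique hg hk hC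
  have hlt := hg.clique_lt hk hC
  ext D
  simp only [Set.mem_setOf_eq, Set.mem_union, Set.mem_image, Finset.mem_coe]
  constructor
  · intro hD
    by_cases hnD : n ∈ D
    · right
      have hsub : D.erase n ⊆ C₀ := by
        intro v hv
        obtain ⟨hvne, hvD⟩ := Finset.mem_erase.mp hv
        have := hD.1 hnD hvD (Ne.symm hvne)
        rw [ext_adj hg hk hC] at this
        rcases this with h | ⟨-, h⟩ | ⟨h, -⟩
        · exact absurd (hg.supp h).1 (lt_irrefl n)
        · exact h
        · exact absurd h hvne
      have hcard : (D.erase n).card = k - 1 := by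
        rw [Finset.card_erase_of_mem hnD, hD.2]
      have hlt1 : (D.erase n).card < C₀.card := by rw [hcard, hC.2]; omega
      obtain ⟨w, hw, hwD⟩ := Finset.exists_of_ssubset
        (hsub.ssubset_of_ne (fun he => by rw [he] at hlt1; omega))
      refine ⟨w, hw, ?_⟩
      have hDe : C₀.erase w = D.erase n := by
        refine (Finset.eq_of_subset_of_card_le (fun v hv => ?_) ?_).symm
        · obtain ⟨hvne, hvD⟩ := Finset.mem_erase.mp hv
          exact Finset.mem_erase.mpr ⟨fun h => hwD (h ▸ hv), hsub hv⟩
        · rw [Finset.card_erase_of_mem hw, hC.2, hcard]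
      rw [hDe, Finset.insert_erase hnD]
    · left
      refine ⟨fun u hu v hv huv => ?_, hD.2⟩
      have := hD.1 hu hv huv
      rw [ext_adj hg hk hC] at this
      rcases this with h | ⟨rfl, -⟩ | ⟨rfl, -⟩
      · exact h
      · exact absurd hu hnD
      · exact absurd hv hnD
  · rintro (hD | ⟨w, hw, rfl⟩)
    · refine ⟨fun u hu v hv huv => ?_, hD.2⟩
      exact (ext_adj hg hk hC).mpr (Or.inl (hD.1 hu hv huv))
    · constructor
      · intro u hu v hv huv
        simp only [Finset.coe_insert, Set.mem_insert_iff, Finset.mem_coe] at hu hv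
        rw [ext_adj hg hk hC]
        rcases hu with rfl | hu <;> rcases hv with rfl | hv
        · exact absurd rfl huv
        · exact Or.inr (Or.inl ⟨rfl, Finset.erase_subset _ _ hv⟩)
        · exact Or.inr (Or.inr ⟨rfl, Finset.erase_subset _ _ hu⟩)
        · exact Or.inl (hC.1 (Finset.erase_subset _ _ hu) (Finset.erase_subset _ _ hv) huv)
      · rw [Finset.card_insert_of_notMem (fun h => hnC (Finset.erase_subset _ _ h)),
          Finset.card_erase_of_mem hw, hC.2]
        omega

end Ext

section Step

variable {k n : ℕ} {g : SimpleGraph ℕ} {C₀ : Finset ℕ}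

lemma ext_injOn (hnC : n ∉ C₀) :
    Set.InjOn (fun w => insert n (C₀.erase w)) ↑C₀ := by
  intro w hw w' hw' he
  simp only at he
  have herase : C₀.erase w = C₀.erase w' := by
    have h1 : (insert n (C₀.erase w)).erase n = C₀.erase w :=
      Finset.erase_insert (fun h => hnC (Finset.erase_subset _ _ h))
    have h2 : (insert n (C₀.erase w')).erase n = C₀.erase w' :=
      Finset.erase_insert (fun h => hnC (Finset.erase_subset _ _ h))
    rw [← h1, ← h2, he]
  by_contra hne
  have : w' ∈ C₀.erase w := Finset.mem_erase.mpr ⟨Ne.symm hne, hw'⟩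
  rw [herase] at this
  exact (Finset.mem_erase.mp this).1 rfl

lemma ext_cliques_iff (hg : Inv k n g) (hk : 2 ≤ k) (hC : g.IsNClique k C₀)
    {D : Finset ℕ} : (extendGraph g n C₀).IsNClique k D ↔
      g.IsNClique k D ∨ ∃ w ∈ C₀, D = insert n (C₀.erase w) := by
  have h := Set.ext_iff.mp (ext_cliques hg hk hC) D
  simp only [Set.mem_setOf_eq, Set.mem_union, Set.mem_image, Finset.mem_coe] at h
  rw [h]
  constructor
  · rintro (h | ⟨w, hw, he⟩)
    · exact Or.inl h
    · exact Or.inr ⟨w, hw, he.symm⟩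
  · rintro (h | ⟨w, hw, he⟩)
    · exact Or.inl h
    · exact Or.inr ⟨w, hw, he.symm⟩

lemma arith_k (k : ℕ) (hk : 2 ≤ k) : k + k * (k - 2) = (k - 1) * k := by
  obtain ⟨j, rfl⟩ : ∃ j, k = j + 2 := ⟨k - 2, by omega⟩
  have e1 : j + 2 - 2 = j := by omega
  have e2 : j + 2 - 1 = j + 1 := by omega
  rw [e1, e2]; ring

lemma inv_step (hg : Inv k n g) (hk : 2 ≤ k) (hC : g.IsNClique k C₀) :
    Inv k (n + 1) (extendGraph g n C₀) := by
  have hnC := n_not_mem_clique hg hk hC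
  have hlt := hg.clique_lt hk hC
  set E := extendGraph g n C₀ with hE
  have himg_n : ∀ D ∈ (fun w => insert n (C₀.erase w)) '' ↑C₀, n ∈ D := by
    rintro D ⟨w, hw, rfl⟩; exact Finset.mem_insert_self _ _
  have hold_n : ∀ D ∈ {D : Finset ℕ | g.IsNClique k D}, n ∉ D := by
    intro D hD hn
    exact absurd (hg.clique_lt hk hD n hn) (lt_irrefl n)
  have hdisj : Disjoint {D : Finset ℕ | g.IsNClique k D}
      ((fun w => insert n (C₀.erase w)) '' ↑C₀) :=
    Set.disjoint_left.mpr (fun D hD hD' => hold_n D hD (himg_n D hD'))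
  have himgfin : ((fun w => insert n (C₀.erase w)) '' ↑C₀).Finite :=
    C₀.finite_toSet.image _
  have himgcard : ((fun w => insert n (C₀.erase w)) '' ↑C₀).ncard = k := by
    rw [Set.ncard_image_of_injOn (ext_injOn hnC), Set.ncard_coe_finset, hC.2]
  refine ⟨?_, ?_, ?_, ?_, ?_, ?_⟩
  · intro u v h
    rw [hE, ext_adj hg hk hC] at h
    rcases h with h | ⟨h1, h2⟩ | ⟨h1, h2⟩
    · exact ⟨Nat.lt_succ_of_lt (hg.supp h).1, Nat.lt_succ_of_lt (hg.supp h).2⟩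
    · exact ⟨by rw [h1]; exact Nat.lt_succ_self n, Nat.lt_succ_of_lt (hlt v h2)⟩
    · exact ⟨Nat.lt_succ_of_lt (hlt u h2), by rw [h1]; exact Nat.lt_succ_self n⟩
  · intro v
    by_cases hv : v = n
    · rw [hv, hE, ext_nbhd_n hg hk hC]; exact C₀.finite_toSet
    · by_cases hv2 : v ∈ C₀
      · rw [hE, ext_nbhd_mem hg hk hC hv2]; exact (hg.nbhdFin v).insert n
      · rw [hE, ext_nbhd_not_mem hg hk hC hv hv2]; exact hg.nbhdFin v
  · intro v hv
    by_cases hveq : v = n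
    · rw [hveq, hE, ext_nbhd_n hg hk hC, Set.ncard_coe_finset, hC.2]
    · have hvn : v < n := by omega
      by_cases hv2 : v ∈ C₀
      · rw [hE, ext_nbhd_mem hg hk hC hv2,
          Set.ncard_insert_of_notMem (not_mem_nbhd hg v) (hg.nbhdFin v)]
        have := hg.degLB v hvn
        omega
      · rw [hE, ext_nbhd_not_mem hg hk hC hveq hv2]
        exact hg.degLB v hvn
  · rw [hE, ext_cliques hg hk hC]
    exact hg.clFin.union himgfin
  · rw [hE, ext_cliques hg hk hC, Set.ncard_union_eq hdisj hg.clFin himgfin, himgcard]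
    have := hg.clCard
    have h2 : k * (n + 1) = k * n + k := by ring
    rw [h2]
    linarith
  · intro v hv
    by_cases hveq : v = n
    · rw [hveq]
      have hset : {D : Finset ℕ | E.IsNClique k D ∧ n ∈ D}
          = (fun w => insert n (C₀.erase w)) '' ↑C₀ := by
        ext D
        simp only [Set.mem_setOf_eq, hE, ext_cliques_iff hg hk hC]
        constructor
        · rintro ⟨hD | ⟨w, hw, rfl⟩, hvD⟩
          · exact absurd hvD (hold_n D hD)
          · exact ⟨w, hw, rfl⟩
        · rintro ⟨w, hw, rfl⟩
          exact ⟨Or.inr ⟨w, hw, rfl⟩, Finset.mem_insert_self _ _⟩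
      rw [hset, himgcard, hE, ext_nbhd_n hg hk hC, Set.ncard_coe_finset, hC.2]
      exact arith_k k hk
    · have hvn : v < n := by omega
      by_cases hv2 : v ∈ C₀
      · have hset : {D : Finset ℕ | E.IsNClique k D ∧ v ∈ D}
            = {D : Finset ℕ | g.IsNClique k D ∧ v ∈ D}
              ∪ (fun w => insert n (C₀.erase w)) '' ↑(C₀.erase v) := by
          ext D
          simp only [Set.mem_setOf_eq, hE, ext_cliques_iff hg hk hC, Set.mem_union,
            Set.mem_image, Finset.mem_coe]
          constructor
          · rintro ⟨hD | ⟨w, hw, rfl⟩, hvD⟩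
            · exact Or.inl ⟨hD, hvD⟩
            · right
              refine ⟨w, Finset.mem_erase.mpr ⟨?_, hw⟩, rfl⟩
              rcases Finset.mem_insert.mp hvD with h | h
              · exact absurd h hveq
              · exact fun he => (Finset.mem_erase.mp h).1 he.symm
          · rintro (⟨hD, hvD⟩ | ⟨w, hw, rfl⟩)
            · exact ⟨Or.inl hD, hvD⟩
            · obtain ⟨hwv, hwC⟩ := Finset.mem_erase.mp hw
              refine ⟨Or.inr ⟨w, hwC, rfl⟩, ?_⟩
              exact Finset.mem_insert.mpr (Or.inr (Finset.mem_erase.mpr ⟨Ne.symm hwv, hv2⟩))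
        have hdisj2 : Disjoint {D : Finset ℕ | g.IsNClique k D ∧ v ∈ D}
            ((fun w => insert n (C₀.erase w)) '' ↑(C₀.erase v)) := by
          refine Set.disjoint_left.mpr ?_
          rintro D ⟨hD, -⟩ ⟨w, hw, rfl⟩
          exact hold_n _ hD (Finset.mem_insert_self _ _)
        have hfin1 : {D : Finset ℕ | g.IsNClique k D ∧ v ∈ D}.Finite :=
          hg.clFin.subset (fun D hD => hD.1)
        have hfin2 : ((fun w => insert n (C₀.erase w)) '' ↑(C₀.erase v)).Finite :=
          (C₀.erase v).finite_toSet.image _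
        have hcard2 : ((fun w => insert n (C₀.erase w)) '' ↑(C₀.erase v)).ncard = k - 1 := by
          rw [Set.ncard_image_of_injOn ((ext_injOn hnC).mono (by
            intro x hx
            exact Finset.mem_coe.mpr (Finset.erase_subset _ _ (Finset.mem_coe.mp hx)))),
            Set.ncard_coe_finset, Finset.card_erase_of_mem hv2, hC.2]
        rw [hset, Set.ncard_union_eq hdisj2 hfin1 hfin2, hcard2, hE,
          ext_nbhd_mem hg hk hC hv2,
          Set.ncard_insert_of_notMem (not_mem_nbhd hg v) (hg.nbhdFin v)]
        have h0 := hg.clAt v hvn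
        have h2 : (k - 1) * ((g.neighborSet v).ncard + 1)
            = (k - 1) * (g.neighborSet v).ncard + (k - 1) := by ring
        rw [h2]
        have hk1 : 1 ≤ k - 1 := by omega
        linarith
      · have hset : {D : Finset ℕ | E.IsNClique k D ∧ v ∈ D}
            = {D : Finset ℕ | g.IsNClique k D ∧ v ∈ D} := by
          ext D
          simp only [Set.mem_setOf_eq, hE, ext_cliques_iff hg hk hC]
          constructor
          · rintro ⟨hD | ⟨w, hw, rfl⟩, hvD⟩
            · exact ⟨hD, hvD⟩
            · rcases Finset.mem_insert.mp hvD with h | h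
              · exact absurd h hveq
              · exact absurd (Finset.erase_subset _ _ h) hv2
          · rintro ⟨hD, hvD⟩
            exact ⟨Or.inl hD, hvD⟩
        rw [hset, hE, ext_nbhd_not_mem hg hk hC hveq hv2]
        exact hg.clAt v hvn

end Step

lemma reach_inv {k n : ℕ} {g : SimpleGraph ℕ} (hk : 2 ≤ k) (h : Reach k n g) :
    Inv k n g := by
  induction h with
  | base => exact inv_base hk
  | step hn hr hC ih => exact inv_step ih hk hC

lemma reach_ge {k n : ℕ} {g : SimpleGraph ℕ} (h : Reach k n g) : k + 1 ≤ n := by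
  induction h with
  | base => exact le_refl _
  | step hn hr hC ih => omega

lemma reach_succ {k n : ℕ} {g' : SimpleGraph ℕ} (hn : k + 1 ≤ n) (h : Reach k (n + 1) g') :
    ∃ g C, Reach k n g ∧ g.IsNClique k C ∧ g' = extendGraph g n C := by
  cases h with
  | base => omega
  | step hle hr hC => exact ⟨_, _, hr, hC, rfl⟩

lemma reach_init {k : ℕ} {g : SimpleGraph ℕ} (h : Reach k (k + 1) g) :
    g = completeBelow (k + 1) := by
  cases h with
  | base => rfl
  | step hle hr hC => omega

lemma reach_finite {k : ℕ} (hk : 2 ≤ k) : ∀ n, {g : SimpleGraph ℕ | Reach k n g}.Finite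
  | 0 => by
    convert Set.finite_empty
    ext g
    simp only [Set.mem_setOf_eq, Set.mem_empty_iff_false, iff_false]
    intro h
    have := reach_ge h
    omega
  | (n + 1) => by
    by_cases hn : k + 1 ≤ n
    · have hfin := reach_finite hk n
      have hsub : {g' : SimpleGraph ℕ | Reach k (n+1) g'}
          ⊆ ⋃ g ∈ {g : SimpleGraph ℕ | Reach k n g},
              (fun C => extendGraph g n C) '' {C : Finset ℕ | g.IsNClique k C} := by
        intro g' h
        obtain ⟨g, C, hr, hC, rfl⟩ := reach_succ hn h
        exact Set.mem_biUnion hr ⟨C, hC, rfl⟩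
      exact (Set.Finite.biUnion hfin
        (fun g hg => ((reach_inv hk hg).clFin.image _))).subset hsub
    · by_cases hn2 : n + 1 = k + 1
      · have : {g : SimpleGraph ℕ | Reach k (n+1) g} ⊆ {completeBelow (k+1)} := by
          intro g h
          rw [hn2] at h
          exact reach_init h
        exact (Set.finite_singleton _).subset this
      · have : {g : SimpleGraph ℕ | Reach k (n+1) g} ⊆ ∅ := by
          intro g h
          have := reach_ge h
          omega
        exact Set.finite_empty.subset this

noncomputable def cliqueFin (k n : ℕ) (g : SimpleGraph ℕ) : Finset (Finset ℕ) :=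
  ((Finset.range n).powersetCard k).filter (fun C => g.IsNClique k C)

lemma mem_cliqueFin {k n : ℕ} {g : SimpleGraph ℕ} (hk : 2 ≤ k) (hg : Inv k n g)
    {C : Finset ℕ} : C ∈ cliqueFin k n g ↔ g.IsNClique k C := by
  constructor
  · exact fun h => (Finset.mem_filter.mp h).2
  · intro h
    refine Finset.mem_filter.mpr ⟨Finset.mem_powersetCard.mpr
      ⟨fun v hv => Finset.mem_range.mpr (hg.clique_lt hk h v hv), h.2⟩, h⟩

lemma coe_cliqueFin {k n : ℕ} {g : SimpleGraph ℕ} (hk : 2 ≤ k) (hg : Inv k n g) :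
    ↑(cliqueFin k n g) = {C : Finset ℕ | g.IsNClique k C} :=
  Set.ext fun C => by rw [Finset.mem_coe, mem_cliqueFin hk hg]; rfl

lemma cliqueFin_card {k n : ℕ} {g : SimpleGraph ℕ} (hk : 2 ≤ k) (hg : Inv k n g) :
    (cliqueFin k n g).card + k ^ 2 = k * n + 1 := by
  rw [← Set.ncard_coe_finset, coe_cliqueFin hk hg]
  exact hg.clCard

lemma degCount_eq (g : SimpleGraph ℕ) (m e : ℕ) :
    degCount g m e
      = ((Finset.range m).filter (fun v => (g.neighborSet v).ncard = e)).card := by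
  rw [degCount, ← Set.ncard_coe_finset]
  congr 1
  ext v
  simp only [Set.mem_setOf_eq, Finset.coe_filter, Finset.mem_range]

section Count

variable {k n : ℕ} {g : SimpleGraph ℕ} {C₀ : Finset ℕ}

lemma degCount_ext (hg : Inv k n g) (hk : 2 ≤ k) (hC : g.IsNClique k C₀)
    {d : ℕ} (hd : k < d) :
    degCount (extendGraph g n C₀) (n + 1) d
        + ((Finset.range n).filter
            (fun v => (g.neighborSet v).ncard = d ∧ v ∈ C₀)).card
      = degCount g n d
        + ((Finset.range n).filter
            (fun v => (g.neighborSet v).ncard = d - 1 ∧ v ∈ C₀)).card := by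
  have hlt := hg.clique_lt hk hC
  set E := extendGraph g n C₀ with hE
  have f3 : (E.neighborSet n).ncard = k := by
    rw [hE, ext_nbhd_n hg hk hC, Set.ncard_coe_finset, hC.2]
  have f1 : ∀ v, v ∈ C₀ → (E.neighborSet v).ncard = (g.neighborSet v).ncard + 1 := by
    intro v hv
    rw [hE, ext_nbhd_mem hg hk hC hv,
      Set.ncard_insert_of_notMem (not_mem_nbhd hg v) (hg.nbhdFin v)]
  have f2 : ∀ v, v ≠ n → v ∉ C₀ → (E.neighborSet v).ncard = (g.neighborSet v).ncard := by
    intro v h1 h2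
    rw [hE, ext_nbhd_not_mem hg hk hC h1 h2]
  -- the degree-d vertices of E within range (n+1)
  have key : (Finset.range (n+1)).filter (fun v => (E.neighborSet v).ncard = d)
      = ((Finset.range n).filter (fun v => (g.neighborSet v).ncard = d - 1 ∧ v ∈ C₀))
        ∪ ((Finset.range n).filter (fun v => (g.neighborSet v).ncard = d ∧ v ∉ C₀)) := by
    ext v
    simp only [Finset.mem_filter, Finset.mem_range, Finset.mem_union]
    constructor
    · rintro ⟨hv, hdeg⟩
      rcases Nat.lt_succ_iff_lt_or_eq.mp hv with hv' | rfl
      · by_cases hmem : v ∈ C₀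
        · left
          rw [f1 v hmem] at hdeg
          exact ⟨hv', by omega, hmem⟩
        · right
          have hne : v ≠ n := by omega
          rw [f2 v hne hmem] at hdeg
          exact ⟨hv', hdeg, hmem⟩
      · rw [f3] at hdeg; omega
    · rintro (⟨hv, hdeg, hmem⟩ | ⟨hv, hdeg, hmem⟩)
      · refine ⟨by omega, ?_⟩
        rw [f1 v hmem, hdeg]
        omega
      · refine ⟨by omega, ?_⟩
        rw [f2 v (by omega) hmem, hdeg]
  have hdisjkey : Disjoint
      ((Finset.range n).filter (fun v => (g.neighborSet v).ncard = d - 1 ∧ v ∈ C₀))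
      ((Finset.range n).filter (fun v => (g.neighborSet v).ncard = d ∧ v ∉ C₀)) := by
    refine Finset.disjoint_left.mpr ?_
    intro v h1 h2
    exact (Finset.mem_filter.mp h2).2.2 (Finset.mem_filter.mp h1).2.2
  have hsplit : degCount g n d
      = ((Finset.range n).filter (fun v => (g.neighborSet v).ncard = d ∧ v ∈ C₀)).card
        + ((Finset.range n).filter (fun v => (g.neighborSet v).ncard = d ∧ v ∉ C₀)).card := by
    rw [degCount_eq]
    rw [← Finset.filter_filter, ← Finset.filter_filter]
    exact (Finset.card_filter_add_card_filter_not (p := fun v => v ∈ C₀)).symm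
  rw [degCount_eq, key, Finset.card_union_of_disjoint hdisjkey, hsplit]
  omega

lemma sum_filter_card (hg : Inv k n g) (hk : 2 ≤ k) (e : ℕ) :
    (∑ C ∈ cliqueFin k n g,
        ((Finset.range n).filter (fun v => (g.neighborSet v).ncard = e ∧ v ∈ C)).card)
        + k * (k - 2) * degCount g n e
      = (k - 1) * e * degCount g n e := by
  have hAt : ∀ v < n, (((cliqueFin k n g).filter (fun C => v ∈ C)).card) + k * (k - 2)
      = (k - 1) * (g.neighborSet v).ncard := by
    intro v hv
    have hco : ↑((cliqueFin k n g).filter (fun C => v ∈ C))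
        = {C : Finset ℕ | g.IsNClique k C ∧ v ∈ C} := by
      ext C
      simp only [Finset.coe_filter, Set.mem_setOf_eq, mem_cliqueFin hk hg]
    have := hg.clAt v hv
    rw [← hco, Set.ncard_coe_finset] at this
    exact this
  have step1 : ∀ C : Finset ℕ,
      ((Finset.range n).filter (fun v => (g.neighborSet v).ncard = e ∧ v ∈ C)).card
        = ∑ v ∈ Finset.range n, ite ((g.neighborSet v).ncard = e ∧ v ∈ C) 1 0 := by
    intro C
    rw [Finset.card_filter]
  rw [Finset.sum_congr rfl (fun C _ => step1 C), Finset.sum_comm]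
  have step2 : ∀ v ∈ Finset.range n,
      (∑ C ∈ cliqueFin k n g, ite ((g.neighborSet v).ncard = e ∧ v ∈ C) 1 0)
        = ite ((g.neighborSet v).ncard = e)
            (((cliqueFin k n g).filter (fun C => v ∈ C)).card) 0 := by
    intro v hv
    by_cases he : (g.neighborSet v).ncard = e
    · rw [if_pos he, Finset.card_filter]
      refine Finset.sum_congr rfl (fun C _ => ?_)
      simp [he]
    · rw [if_neg he]
      refine Finset.sum_eq_zero (fun C _ => ?_)
      simp [he]
  rw [Finset.sum_congr rfl step2, ← Finset.sum_filter]
  have hX : degCount g n e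
      = ((Finset.range n).filter (fun v => (g.neighborSet v).ncard = e)).card :=
    degCount_eq g n e
  rw [hX, Finset.card_eq_sum_ones ((Finset.range n).filter _), Finset.mul_sum,
    Finset.mul_sum, ← Finset.sum_add_distrib]
  refine Finset.sum_congr rfl (fun v hv => ?_)
  obtain ⟨hvn, hve⟩ := Finset.mem_filter.mp hv
  rw [mul_one, mul_one, hAt v (Finset.mem_range.mp hvn), hve]

end Count

section Prob

variable {k : ℕ} {Ω : Type} [MeasurableSpace Ω] {μ : Measure Ω}
  {G : ℕ → Ω → SimpleGraph ℕ}

lemma meas_E (hG : IsRandomKTreeProcess k μ G) (n : ℕ) (g : SimpleGraph ℕ)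
    (C : Finset ℕ) :
    MeasurableSet {ω | G n ω = g ∧ G (n + 1) ω = extendGraph g n C} := by
  have : {ω | G n ω = g ∧ G (n + 1) ω = extendGraph g n C}
      = {ω | G n ω = g} ∩ {ω | G (n + 1) ω = extendGraph g n C} := rfl
  rw [this]
  exact (hG.meas n g).inter (hG.meas (n + 1) _)

lemma cliqueFin_card_pos {n : ℕ} {g : SimpleGraph ℕ} (hk : 2 ≤ k) (hg : Inv k n g)
    (hn : k + 1 ≤ n) : 0 < (cliqueFin k n g).card := by
  have h1 := cliqueFin_card hk hg
  have h2 : k * (k + 1) ≤ k * n := Nat.mul_le_mul_left k hn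
  have h3 : k * (k + 1) = k ^ 2 + k := by ring
  linarith

lemma step_value (hG : IsRandomKTreeProcess k μ G) (hk : 2 ≤ k) {n : ℕ}
    (hn : k + 1 ≤ n) {g : SimpleGraph ℕ} (hg : Inv k n g) {C : Finset ℕ}
    (hC : g.IsNClique k C) :
    μ {ω | G n ω = g ∧ G (n + 1) ω = extendGraph g n C}
      = μ {ω | G n ω = g} / ((cliqueFin k n g).card : ENNReal) := by
  rw [hG.step n hn g C hC]
  congr 1
  rw [← coe_cliqueFin hk hg, Set.ncard_coe_finset]

lemma E_disjoint (hk : 2 ≤ k) {n : ℕ} {g : SimpleGraph ℕ} (hg : Inv k n g)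
    {C C' : Finset ℕ} (hC : g.IsNClique k C) (hC' : g.IsNClique k C') (hne : C ≠ C') :
    Disjoint {ω | G n ω = g ∧ G (n + 1) ω = extendGraph g n C}
      {ω | G n ω = g ∧ G (n + 1) ω = extendGraph g n C'} := by
  rw [Set.disjoint_left]
  rintro ω ⟨-, h1⟩ ⟨-, h2⟩
  apply hne
  have hh : extendGraph g n C = extendGraph g n C' := by rw [← h1, ← h2]
  have := congrArg (fun (E : SimpleGraph ℕ) => E.neighborSet n) hh
  simp only [ext_nbhd_n hg hk hC, ext_nbhd_n hg hk hC'] at this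
  exact_mod_cast Finset.coe_injective this

lemma union_E (hG : IsRandomKTreeProcess k μ G) (hk : 2 ≤ k) {n : ℕ}
    (hn : k + 1 ≤ n) {g : SimpleGraph ℕ} (hg : Inv k n g) :
    μ (⋃ C ∈ cliqueFin k n g, {ω | G n ω = g ∧ G (n + 1) ω = extendGraph g n C})
      = μ {ω | G n ω = g} := by
  rw [measure_biUnion_finset ?hd (fun C _ => meas_E hG n g C)]
  case hd =>
    intro C hC C' hC' hne
    exact E_disjoint hk hg ((mem_cliqueFin hk hg).mp hC)
      ((mem_cliqueFin hk hg).mp hC') hne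
  have hval : ∀ C ∈ cliqueFin k n g,
      μ {ω | G n ω = g ∧ G (n + 1) ω = extendGraph g n C}
        = μ {ω | G n ω = g} / ((cliqueFin k n g).card : ENNReal) :=
    fun C hC => step_value hG hk hn hg ((mem_cliqueFin hk hg).mp hC)
  rw [Finset.sum_congr rfl hval, Finset.sum_const, nsmul_eq_mul]
  rw [ENNReal.mul_div_cancel]
  · have := cliqueFin_card_pos hk hg hn
    simp only [ne_eq, Nat.cast_eq_zero]
    omega
  · exact ENNReal.natCast_ne_top _

lemma union_Gn_eq (hk : 2 ≤ k) (n : ℕ) (G : ℕ → Ω → SimpleGraph ℕ) :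
    ⋃ g ∈ (reach_finite hk n).toFinset, {ω | G n ω = g}
      = {ω | Reach k n (G n ω)} := by
  ext ω
  simp only [Set.mem_iUnion, Set.mem_setOf_eq, Set.Finite.mem_toFinset, exists_prop]
  constructor
  · rintro ⟨g, hg, he⟩
    rw [he]
    exact hg
  · intro h
    exact ⟨G n ω, h, rfl⟩

lemma Gn_disjoint (n : ℕ) {g g' : SimpleGraph ℕ} (hne : g ≠ g') :
    Disjoint {ω | G n ω = g} {ω | G n ω = g'} := by
  rw [Set.disjoint_left]
  intro ω h1 h2
  exact hne (h1.symm.trans h2)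

lemma cover_pairs (hG : IsRandomKTreeProcess k μ G) (hk : 2 ≤ k) {n : ℕ}
    (hn : k + 1 ≤ n) (hsup : μ {ω | Reach k n (G n ω)} = 1) :
    μ (⋃ g ∈ (reach_finite hk n).toFinset, ⋃ C ∈ cliqueFin k n g,
        {ω | G n ω = g ∧ G (n + 1) ω = extendGraph g n C}) = 1 := by
  have hEsub : ∀ (g : SimpleGraph ℕ) (C : Finset ℕ),
      {ω | G n ω = g ∧ G (n + 1) ω = extendGraph g n C} ⊆ {ω | G n ω = g} :=
    fun g C ω h => h.1
  rw [measure_biUnion_finset ?hd ?hm]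
  case hd =>
    intro g hg g' hg' hne
    refine Set.disjoint_left.mpr ?_
    intro ω h1 h2
    simp only [Set.mem_iUnion, exists_prop] at h1 h2
    obtain ⟨C, -, h1⟩ := h1
    obtain ⟨C', -, h2⟩ := h2
    exact hne ((h1.1).symm.trans h2.1)
  case hm =>
    intro g hg
    exact Finset.measurableSet_biUnion _ (fun C _ => meas_E hG n g C)
  have hval : ∀ g ∈ (reach_finite hk n).toFinset,
      μ (⋃ C ∈ cliqueFin k n g, {ω | G n ω = g ∧ G (n + 1) ω = extendGraph g n C})
        = μ {ω | G n ω = g} := by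
    intro g hg
    exact union_E hG hk hn (reach_inv hk ((reach_finite hk n).mem_toFinset.mp hg))
  rw [Finset.sum_congr rfl hval,
    ← measure_biUnion_finset (fun g hg g' hg' hne => Gn_disjoint (G := G) n hne)
      (fun g _ => hG.meas n g),
    union_Gn_eq hk n G, hsup]

lemma support (hG : IsRandomKTreeProcess k μ G) [IsProbabilityMeasure μ] (hk : 2 ≤ k) :
    ∀ n, k + 1 ≤ n → μ {ω | Reach k n (G n ω)} = 1 := by
  refine Nat.le_induction ?_ ?_
  · refine le_antisymm (prob_le_one) ?_
    have hsub : {ω | G (k + 1) ω = completeBelow (k + 1)}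
        ⊆ {ω | Reach k (k + 1) (G (k + 1) ω)} := by
      intro ω h
      simp only [Set.mem_setOf_eq] at h ⊢
      rw [h]
      exact Reach.base
    calc (1 : ENNReal) = μ {ω | G (k + 1) ω = completeBelow (k + 1)} := hG.init.symm
    _ ≤ _ := measure_mono hsub
  · intro n hn IH
    refine le_antisymm (prob_le_one) ?_
    have h1 := cover_pairs hG hk hn IH
    refine h1 ▸ measure_mono ?_
    intro ω hω
    simp only [Set.mem_iUnion, exists_prop, Set.Finite.mem_toFinset] at hω
    obtain ⟨g, hg, C, hC, he1, he2⟩ := hω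
    simp only [Set.mem_setOf_eq]
    rw [he2]
    exact Reach.step hn hg ((mem_cliqueFin hk (reach_inv hk hg)).mp hC)

end Prob

section Integral

variable {Ω : Type} [MeasurableSpace Ω] {μ : Measure Ω} [IsProbabilityMeasure μ]

lemma integral_eq_sum {ι : Type*} (s : Finset ι) (E : ι → Set Ω)
    (hm : ∀ i ∈ s, MeasurableSet (E i))
    (hd : ∀ i ∈ s, ∀ j ∈ s, i ≠ j → Disjoint (E i) (E j))
    (hcov : μ (⋃ i ∈ s, E i) = 1)
    (f : Ω → ℝ) (c : ι → ℝ)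
    (hf : ∀ i ∈ s, ∀ ω ∈ E i, f ω = c i) :
    ∫ ω, f ω ∂μ = ∑ i ∈ s, c i * (μ (E i)).toReal := by
  have hUm : MeasurableSet (⋃ i ∈ s, E i) := Finset.measurableSet_biUnion _ hm
  have hUc : μ (⋃ i ∈ s, E i)ᶜ = 0 := by
    rw [measure_compl hUm (measure_ne_top μ _), hcov, measure_univ, tsub_self]
  have hptwise : ∀ ω ∈ ⋃ i ∈ s, E i,
      f ω = ∑ i ∈ s, Set.indicator (E i) (fun _ => c i) ω := by
    intro ω hω
    simp only [Set.mem_iUnion, exists_prop] at hω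
    obtain ⟨i, hi, hωi⟩ := hω
    rw [Finset.sum_eq_single i]
    · rw [Set.indicator_of_mem hωi]
      exact hf i hi ω hωi
    · intro j hj hji
      exact Set.indicator_of_notMem
        (fun hωj => (Set.disjoint_left.mp (hd j hj i hi hji)) hωj hωi) _
    · intro hi'; exact absurd hi hi'
  have hae : f =ᵐ[μ] fun ω => ∑ i ∈ s, Set.indicator (E i) (fun _ => c i) ω := by
    rw [Filter.EventuallyEq, ae_iff]
    refine measure_mono_null ?_ hUc
    intro ω h
    by_contra h2
    rw [Set.mem_compl_iff, not_not] at h2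
    exact h (hptwise ω h2)
  rw [integral_congr_ae hae,
    integral_finset_sum s (fun i hi => ((integrable_indicator_iff (hm i hi)).mpr
      ((integrableOn_const_iff (C := c i)).mpr (Or.inr (measure_lt_top μ _)))))]
  refine Finset.sum_congr rfl (fun i hi => ?_)
  rw [integral_indicator_const _ (hm i hi), smul_eq_mul, mul_comm, measureReal_def]

end Integral

section Apply

variable {k : ℕ} {Ω : Type} [MeasurableSpace Ω] {μ : Measure Ω}
  [IsProbabilityMeasure μ] {G : ℕ → Ω → SimpleGraph ℕ}

lemma integral_now (hG : IsRandomKTreeProcess k μ G) (hk : 2 ≤ k) {n : ℕ}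
    (hn : k + 1 ≤ n) (e : ℕ) :
    ∫ ω, (degCount (G n ω) n e : ℝ) ∂μ
      = ∑ g ∈ (reach_finite hk n).toFinset,
          (degCount g n e : ℝ) * (μ {ω | G n ω = g}).toReal := by
  refine integral_eq_sum (reach_finite hk n).toFinset (fun g => {ω | G n ω = g})
    (fun g _ => hG.meas n g) (fun g _ g' _ hne => Gn_disjoint (G := G) n hne) ?_
    _ (fun g => (degCount g n e : ℝ)) ?_
  · rw [union_Gn_eq hk n G]
    exact support hG hk n hn
  · intro g hg ω hω
    simp only [Set.mem_setOf_eq] at hω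
    rw [hω]

lemma integral_next (hG : IsRandomKTreeProcess k μ G) (hk : 2 ≤ k) {n : ℕ}
    (hn : k + 1 ≤ n) (d : ℕ) :
    ∫ ω, (degCount (G (n + 1) ω) (n + 1) d : ℝ) ∂μ
      = ∑ g ∈ (reach_finite hk n).toFinset, ∑ C ∈ cliqueFin k n g,
          (degCount (extendGraph g n C) (n + 1) d : ℝ)
            * (μ {ω | G n ω = g ∧ G (n + 1) ω = extendGraph g n C}).toReal := by
  rw [← Finset.sum_sigma ((reach_finite hk n).toFinset) (fun g => cliqueFin k n g)
    (fun p => (degCount (extendGraph p.1 n p.2) (n + 1) d : ℝ)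
      * (μ {ω | G n ω = p.1 ∧ G (n + 1) ω = extendGraph p.1 n p.2}).toReal)]
  refine integral_eq_sum _
    (fun p : Σ _ : SimpleGraph ℕ, Finset ℕ =>
      {ω | G n ω = p.1 ∧ G (n + 1) ω = extendGraph p.1 n p.2})
    (fun p _ => meas_E hG n p.1 p.2) ?_ ?_ _
    (fun p => (degCount (extendGraph p.1 n p.2) (n + 1) d : ℝ)) ?_
  · rintro ⟨g, C⟩ hp ⟨g', C'⟩ hp' hne
    simp only [Finset.mem_sigma, Set.Finite.mem_toFinset] at hp hp'
    by_cases hgg : g = g'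
    · subst hgg
      have hCC : C ≠ C' := fun h => hne (by rw [h])
      exact E_disjoint hk (reach_inv hk hp.1)
        ((mem_cliqueFin hk (reach_inv hk hp.1)).mp hp.2)
        ((mem_cliqueFin hk (reach_inv hk hp.1)).mp hp'.2) hCC
    · refine Set.disjoint_left.mpr ?_
      rintro ω ⟨h1, -⟩ ⟨h2, -⟩
      exact hgg (h1.symm.trans h2)
  · have hu : (⋃ p ∈ ((reach_finite hk n).toFinset).sigma (fun g => cliqueFin k n g),
        {ω | G n ω = (p : Σ _ : SimpleGraph ℕ, Finset ℕ).1
          ∧ G (n + 1) ω = extendGraph p.1 n p.2})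
        = ⋃ g ∈ (reach_finite hk n).toFinset, ⋃ C ∈ cliqueFin k n g,
            {ω | G n ω = g ∧ G (n + 1) ω = extendGraph g n C} := by
      ext ω
      simp only [Set.mem_iUnion, exists_prop, Finset.mem_sigma, Sigma.exists]
      constructor
      · rintro ⟨g, C, ⟨h1, h2⟩, h3⟩
        exact ⟨g, h1, C, h2, h3⟩
      · rintro ⟨g, h1, C, h2, h3⟩
        exact ⟨g, C, ⟨h1, h2⟩, h3⟩
    rw [hu]
    exact cover_pairs hG hk hn (support hG hk n hn)
  · rintro ⟨g, C⟩ hp ω hω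
    obtain ⟨h1, h2⟩ := hω
    simp only
    rw [h2]

end Apply

theorem final (k : ℕ) (hk : 2 ≤ k)
    {Ω : Type} [MeasurableSpace Ω] (μ : Measure Ω) [IsProbabilityMeasure μ]
    (G : ℕ → Ω → SimpleGraph ℕ) (hG : IsRandomKTreeProcess k μ G)
    (d : ℕ) (hd : k < d) (n : ℕ) (hn : k + 1 ≤ n) :
    ∫ ω, (degCount (G (n + 1) ω) (n + 1) d : ℝ) ∂μ
      = (((k : ℝ) - 1) * ((d : ℝ) - 1) - (k : ℝ) * ((k : ℝ) - 2))
          / ((k : ℝ) * n - (k : ℝ) ^ 2 + 1)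
          * ∫ ω, (degCount (G n ω) n (d - 1) : ℝ) ∂μ
      + (1 - (((k : ℝ) - 1) * (d : ℝ) - (k : ℝ) * ((k : ℝ) - 2))
          / ((k : ℝ) * n - (k : ℝ) ^ 2 + 1))
          * ∫ ω, (degCount (G n ω) n d : ℝ) ∂μ := by
  have c1 : ((k - 1 : ℕ) : ℝ) = (k : ℝ) - 1 := by
    rw [Nat.cast_sub (by omega)]; norm_num
  have c2 : ((k - 2 : ℕ) : ℝ) = (k : ℝ) - 2 := by
    rw [Nat.cast_sub (by omega)]; norm_num
  have c3 : ((d - 1 : ℕ) : ℝ) = (d : ℝ) - 1 := by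
    rw [Nat.cast_sub (by omega)]; norm_num
  rw [integral_next hG hk hn d, integral_now hG hk hn (d - 1), integral_now hG hk hn d,
    Finset.mul_sum, Finset.mul_sum, ← Finset.sum_add_distrib]
  refine Finset.sum_congr rfl (fun g hg => ?_)
  have hgr : Reach k n g := (Set.Finite.mem_toFinset _).mp hg
  have hginv := reach_inv hk hgr
  have hNR : ((cliqueFin k n g).card : ℝ) = (k : ℝ) * n - (k : ℝ) ^ 2 + 1 := by
    have h0 := cliqueFin_card hk hginv
    have h1 : ((cliqueFin k n g).card : ℝ) + (k : ℝ) ^ 2 = (k : ℝ) * (n : ℝ) + 1 := by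
      exact_mod_cast h0
    linarith
  have hNpos : (0 : ℝ) < ((cliqueFin k n g).card : ℝ) := by
    exact_mod_cast cliqueFin_card_pos hk hginv hn
  have hmv : ∀ C ∈ cliqueFin k n g,
      (μ {ω | G n ω = g ∧ G (n + 1) ω = extendGraph g n C}).toReal
        = (μ {ω | G n ω = g}).toReal / ((cliqueFin k n g).card : ℝ) := by
    intro C hC
    rw [step_value hG hk hn hginv ((mem_cliqueFin hk hginv).mp hC),
      ENNReal.toReal_div, ENNReal.toReal_natCast]
  have hL : ∑ C ∈ cliqueFin k n g,
      (degCount (extendGraph g n C) (n + 1) d : ℝ)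
        * (μ {ω | G n ω = g ∧ G (n + 1) ω = extendGraph g n C}).toReal
      = ((∑ C ∈ cliqueFin k n g, degCount (extendGraph g n C) (n + 1) d : ℕ) : ℝ)
          * ((μ {ω | G n ω = g}).toReal / ((cliqueFin k n g).card : ℝ)) := by
    rw [Finset.sum_congr rfl (fun C hC => by rw [hmv C hC]), ← Finset.sum_mul,
      Nat.cast_sum]
  -- ℕ identities
  have hper : ∀ C ∈ cliqueFin k n g,
      degCount (extendGraph g n C) (n + 1) d
          + ((Finset.range n).filter
              (fun v => (g.neighborSet v).ncard = d ∧ v ∈ C)).card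
        = degCount g n d
          + ((Finset.range n).filter
              (fun v => (g.neighborSet v).ncard = d - 1 ∧ v ∈ C)).card :=
    fun C hC => degCount_ext hginv hk ((mem_cliqueFin hk hginv).mp hC) hd
  have hK1n := Finset.sum_congr rfl hper
  rw [Finset.sum_add_distrib, Finset.sum_add_distrib, Finset.sum_const,
    smul_eq_mul] at hK1n
  have hK2n := sum_filter_card hginv hk (d - 1)
  have hK3n := sum_filter_card hginv hk d
  have e1 : ((∑ C ∈ cliqueFin k n g, degCount (extendGraph g n C) (n + 1) d : ℕ) : ℝ)
      + ((∑ C ∈ cliqueFin k n g, ((Finset.range n).filter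
          (fun v => (g.neighborSet v).ncard = d ∧ v ∈ C)).card : ℕ) : ℝ)
      = ((cliqueFin k n g).card : ℝ) * (degCount g n d : ℝ)
      + ((∑ C ∈ cliqueFin k n g, ((Finset.range n).filter
          (fun v => (g.neighborSet v).ncard = d - 1 ∧ v ∈ C)).card : ℕ) : ℝ) := by
    exact_mod_cast congrArg (fun m : ℕ => (m : ℝ)) hK1n
  have e2 : ((∑ C ∈ cliqueFin k n g, ((Finset.range n).filter
          (fun v => (g.neighborSet v).ncard = d - 1 ∧ v ∈ C)).card : ℕ) : ℝ)
      + (k : ℝ) * ((k : ℝ) - 2) * (degCount g n (d - 1) : ℝ)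
      = ((k : ℝ) - 1) * ((d : ℝ) - 1) * (degCount g n (d - 1) : ℝ) := by
    have := congrArg (fun m : ℕ => (m : ℝ)) hK2n
    push_cast at this
    rw [c1, c2, c3] at this
    push_cast
    linarith
  have e3 : ((∑ C ∈ cliqueFin k n g, ((Finset.range n).filter
          (fun v => (g.neighborSet v).ncard = d ∧ v ∈ C)).card : ℕ) : ℝ)
      + (k : ℝ) * ((k : ℝ) - 2) * (degCount g n d : ℝ)
      = ((k : ℝ) - 1) * (d : ℝ) * (degCount g n d : ℝ) := by
    have := congrArg (fun m : ℕ => (m : ℝ)) hK3n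
    push_cast at this
    rw [c1, c2] at this
    push_cast
    linarith
  rw [hL]
  have hS : ((∑ C ∈ cliqueFin k n g, degCount (extendGraph g n C) (n + 1) d : ℕ) : ℝ)
      = ((cliqueFin k n g).card : ℝ) * (degCount g n d : ℝ)
        + (((k : ℝ) - 1) * ((d : ℝ) - 1) - (k : ℝ) * ((k : ℝ) - 2))
            * (degCount g n (d - 1) : ℝ)
        - (((k : ℝ) - 1) * (d : ℝ) - (k : ℝ) * ((k : ℝ) - 2))
            * (degCount g n d : ℝ) := by
    linarith
  rw [hS, ← hNR]
  field_simp
  ring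


end KTreeAux

/-- For every integer `k ≥ 2` and every integer `d > k`, in the random `k`-tree process
the expected numbers of vertices of given degrees satisfy, for all `n ≥ k+1`,
`E[X_d(n+1)] = p_k(d−1, n)·E[X_{d−1}(n)] + (1 − p_k(d, n))·E[X_d(n)]`, where
`p_k(d, n) = ((k − 1)·d − k·(k − 2)) / (k·n − k² + 1)`. -/
theorem expected_degree_count_recurrence (k : ℕ) (hk : 2 ≤ k)
    {Ω : Type} [MeasurableSpace Ω] (μ : Measure Ω) [IsProbabilityMeasure μ]
    (G : ℕ → Ω → SimpleGraph ℕ) (hG : IsRandomKTreeProcess k μ G)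
    (d : ℕ) (hd : k < d) (n : ℕ) (hn : k + 1 ≤ n) :
    ∫ ω, (degCount (G (n + 1) ω) (n + 1) d : ℝ) ∂μ
      = (((k : ℝ) - 1) * ((d : ℝ) - 1) - (k : ℝ) * ((k : ℝ) - 2))
          / ((k : ℝ) * n - (k : ℝ) ^ 2 + 1)
          * ∫ ω, (degCount (G n ω) n (d - 1) : ℝ) ∂μ
      + (1 - (((k : ℝ) - 1) * (d : ℝ) - (k : ℝ) * ((k : ℝ) - 2))
          / ((k : ℝ) * n - (k : ℝ) ^ 2 + 1))
          * ∫ ω, (degCount (G n ω) n d : ℝ) ∂μ := by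
  exact KTreeAux.final k hk μ G hG d hd n hn
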